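/- Let b ≥ 0 and ι ≥ 0 be real numbers and set ρ = b + ι. For every real t > 0 and every complex δ, the function v(t) = (cosh t)^δ satisfies v''(t) + (2b·coth t + 2ι·coth 2t)·v'(t) − δ(δ + 2ρ)·v(t) = −δ(δ − 1 + ι)·(cosh t)^{δ−2}. -/

import Mathlib

open Real Complex

private lemma key_alg (C S E b ι δ : ℂ) (hC : C ≠ 0) (hS : S ≠ 0) (h1 : S ^ 2 = C ^ 2 - 1) :
    δ * (1 / C ^ 2) * E + δ * (S / C) * (δ * (S / C) * E)
      + (2 * b * (C / S) + 2 * ι * ((C ^ 2 + S ^ 2) / (2 * S * C))) * (δ * (S / C) * E)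
      - δ * (δ + 2 * (b + ι)) * E
    = -(δ * (δ - 1 + ι)) * (E / C ^ 2) := by
  have hcs : C⁻¹ ^ 2 * S⁻¹ ^ 2 * (C ^ 2 * S ^ 2) = 1 := by
    field_simp
  field_simp
  linear_combination (δ * E * (δ + ι)) * h1


private lemma hasDeriv_v (δ : ℂ) (s : ℝ) :
    HasDerivAt (fun s : ℝ => Complex.exp (δ * (Real.log (Real.cosh s) : ℂ)))
      (δ * ((Real.sinh s / Real.cosh s : ℝ) : ℂ)
        * Complex.exp (δ * (Real.log (Real.cosh s) : ℂ))) s := by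
  have h1 : HasDerivAt (fun s : ℝ => Real.log (Real.cosh s)) (Real.sinh s / Real.cosh s) s :=
    (Real.hasDerivAt_cosh s).log (Real.cosh_pos s).ne'
  have h2 := (h1.ofReal_comp.const_mul δ).cexp
  simpa [mul_comm, mul_assoc, mul_left_comm] using h2

theorem rank_one_BS_cosh (b ι : ℝ) (hb : 0 ≤ b) (hι : 0 ≤ ι) (t : ℝ) (ht : 0 < t) (δ : ℂ) :
    deriv (deriv (fun s : ℝ => Complex.exp (δ * (Real.log (Real.cosh s) : ℂ)))) t
      + ((2 * b * (Real.cosh t / Real.sinh t)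
            + 2 * ι * (Real.cosh (2 * t) / Real.sinh (2 * t)) : ℝ) : ℂ)
          * deriv (fun s : ℝ => Complex.exp (δ * (Real.log (Real.cosh s) : ℂ))) t
      - δ * (δ + 2 * ((b : ℂ) + (ι : ℂ)))
          * Complex.exp (δ * (Real.log (Real.cosh t) : ℂ))
    = -(δ * (δ - 1 + (ι : ℂ)))
        * Complex.exp ((δ - 2) * (Real.log (Real.cosh t) : ℂ)) := by
  have hC : (0:ℝ) < Real.cosh t := Real.cosh_pos t
  have hS : Real.sinh t ≠ 0 := ne_of_gt (Real.sinh_pos_iff.mpr ht)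
  -- first derivative
  have hd1 : deriv (fun s : ℝ => Complex.exp (δ * (Real.log (Real.cosh s) : ℂ)))
      = fun s => δ * ((Real.sinh s / Real.cosh s : ℝ) : ℂ)
          * Complex.exp (δ * (Real.log (Real.cosh s) : ℂ)) := by
    funext s; exact (hasDeriv_v δ s).deriv
  -- derivative of tanh (as complex-valued)
  have htanh : ∀ s : ℝ, HasDerivAt (fun s : ℝ => ((Real.sinh s / Real.cosh s : ℝ) : ℂ))
      (((1 / Real.cosh s ^ 2 : ℝ) : ℂ)) s := by
    intro s
    have : HasDerivAt (fun s : ℝ => Real.sinh s / Real.cosh s)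
        ((Real.cosh s * Real.cosh s - Real.sinh s * Real.sinh s) / Real.cosh s ^ 2) s :=
      (Real.hasDerivAt_sinh s).div (Real.hasDerivAt_cosh s) (Real.cosh_pos s).ne'
    have h2 : (Real.cosh s * Real.cosh s - Real.sinh s * Real.sinh s) / Real.cosh s ^ 2
        = 1 / Real.cosh s ^ 2 := by
      rw [show Real.cosh s * Real.cosh s - Real.sinh s * Real.sinh s
          = Real.cosh s ^ 2 - Real.sinh s ^ 2 by ring, Real.cosh_sq_sub_sinh_sq]
    rw [h2] at this
    exact this.ofReal_comp
  -- second derivative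
  have hd2 : deriv (deriv (fun s : ℝ => Complex.exp (δ * (Real.log (Real.cosh s) : ℂ)))) t
      = δ * ((1 / Real.cosh t ^ 2 : ℝ) : ℂ) * Complex.exp (δ * (Real.log (Real.cosh t) : ℂ))
        + δ * ((Real.sinh t / Real.cosh t : ℝ) : ℂ)
          * (δ * ((Real.sinh t / Real.cosh t : ℝ) : ℂ)
            * Complex.exp (δ * (Real.log (Real.cosh t) : ℂ))) := by
    rw [hd1]
    exact (((htanh t).const_mul δ).mul (hasDeriv_v δ t)).deriv
  rw [hd2, hd1]
  -- rewrite the RHS exponential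
  have hexp : Complex.exp ((δ - 2) * (Real.log (Real.cosh t) : ℂ))
      = Complex.exp (δ * (Real.log (Real.cosh t) : ℂ)) / ((Real.cosh t : ℂ)) ^ 2 := by
    rw [sub_mul, Complex.exp_sub]
    congr 1
    have hL : Complex.exp ((Real.log (Real.cosh t) : ℂ)) = (Real.cosh t : ℂ) := by
      rw [← Complex.ofReal_exp, Real.exp_log hC]
    rw [show (2 : ℂ) * (Real.log (Real.cosh t) : ℂ)
        = (Real.log (Real.cosh t) : ℂ) + (Real.log (Real.cosh t) : ℂ) by ring,
      Complex.exp_add, hL]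
    ring
  rw [hexp]
  -- double angle formulas
  rw [Real.cosh_two_mul, Real.sinh_two_mul]
  have hSsq : (Real.sinh t : ℂ) ^ 2 = (Real.cosh t : ℂ) ^ 2 - 1 := by
    norm_cast; exact Real.sinh_sq t
  simp only [Complex.ofReal_div, Complex.ofReal_mul, Complex.ofReal_add, Complex.ofReal_one,
    Complex.ofReal_ofNat, Complex.ofReal_pow, Complex.ofReal_sub]
  have hC' : (Real.cosh t : ℂ) ≠ 0 := by exact_mod_cast hC.ne'
  have hS' : (Real.sinh t : ℂ) ≠ 0 := by exact_mod_cast hS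
  simp only [Complex.ofReal_cosh, Complex.ofReal_sinh] at hSsq hC' hS' ⊢
  linear_combination key_alg (Complex.cosh (t:ℂ)) (Complex.sinh (t:ℂ))
    (Complex.exp (δ * (Real.log (Real.cosh t) : ℂ))) (b:ℂ) (ι:ℂ) δ hC' hS' hSsq
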